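/- If d(i₁,…,i_s) = i₁ + ⋯ + i_s + s < p, then there exists a polynomial F ∈ ℤ_p[U] with p-adic integer coefficients such that F(n) = f_{i₁…i_s}(n) for every natural number n, F(0) = 0, and deg F = d(i₁,…,i_s). (Lemma 3.3.) -/

import Mathlib

open Polynomial Finset

open scoped Classical in
noncomputable def fN (s : ℕ) (idx : Fin s → ℕ) (n : ℕ) : ℕ :=
  ∑ m ∈ Finset.univ.filter (fun m : Fin s → Fin n => StrictMono m),
    ∏ t : Fin s, (m t : ℕ) ^ idx t

lemma fN_zero (idx : Fin 0 → ℕ) (n : ℕ) : fN 0 idx n = 1 := by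
  classical
  rw [fN, Finset.filter_true_of_mem (fun m _ => Subsingleton.strictMono m)]
  simp

lemma fN_apply_zero (s : ℕ) (hs : 1 ≤ s) (idx : Fin s → ℕ) : fN s idx 0 = 0 := by
  classical
  haveI : IsEmpty (Fin s → Fin 0) := ⟨fun f => (f ⟨0, hs⟩).elim0⟩
  rw [fN]
  simp [Finset.univ_eq_empty]

set_option maxRecDepth 8000 in
lemma fN_succ (s : ℕ) (idx : Fin (s+1) → ℕ) (n : ℕ) :
    fN (s+1) idx n =
      ∑ j ∈ Finset.range n, j ^ idx (Fin.last s) * fN s (idx ∘ Fin.castSucc) j := by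
  classical
  rw [Finset.sum_range (fun j : ℕ => j ^ idx (Fin.last s) * fN s (idx ∘ Fin.castSucc) j)]
  rw [fN, ← Finset.sum_fiberwise_of_maps_to
        (g := fun m : Fin (s+1) → Fin n => m (Fin.last s))
        (t := (Finset.univ : Finset (Fin n))) (fun m _ => Finset.mem_univ _)]
  refine Finset.sum_congr rfl ?_
  intro j _
  rw [fN, Finset.mul_sum]
  refine Finset.sum_bij'
    (i := fun (m : Fin (s+1) → Fin n) (hm : m ∈ _) => fun t : Fin s =>
      (⟨(m t.castSucc : ℕ), by
        simp only [Finset.mem_filter, Finset.mem_univ, true_and] at hm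
        have h1 : m t.castSucc < m (Fin.last s) := hm.1 (Fin.castSucc_lt_last t)
        rw [hm.2] at h1
        exact h1⟩ : Fin (j : ℕ)))
    (j := fun (m' : Fin s → Fin (j:ℕ)) (_ : m' ∈ _) =>
      Fin.snoc (fun u => Fin.castLE j.isLt.le (m' u)) j)
    ?_ ?_ ?_ ?_ ?_
  · intro m hm
    simp only [Finset.mem_filter, Finset.mem_univ, true_and] at hm ⊢
    intro a b hab
    exact hm.1 (Fin.castSucc_lt_castSucc_iff.mpr hab)
  · intro m' hm'
    simp only [Finset.mem_filter, Finset.mem_univ, true_and] at hm' ⊢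
    constructor
    · intro a b hab
      rcases Fin.eq_castSucc_or_eq_last b with ⟨v, rfl⟩ | rfl
      · have ha : a ≠ Fin.last s := Fin.ne_last_of_lt (hab.trans (Fin.castSucc_lt_last v))
        obtain ⟨u, rfl⟩ := Fin.exists_castSucc_eq.mpr ha
        have huv : u < v := Fin.castSucc_lt_castSucc_iff.mp hab
        have h2 := hm' huv
        simp only [Fin.snoc_castSucc]
        exact h2
      · have ha : a ≠ Fin.last s := Fin.ne_last_of_lt hab
        obtain ⟨u, rfl⟩ := Fin.exists_castSucc_eq.mpr ha
        simp only [Fin.snoc_castSucc, Fin.snoc_last]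
        exact (m' u).isLt
    · simp [Fin.snoc_last]
  · intro m hm
    simp only [Finset.mem_filter, Finset.mem_univ, true_and] at hm
    funext t
    refine Fin.lastCases ?_ ?_ t
    · simp [Fin.snoc_last, hm.2]
    · intro u
      simp [Fin.snoc_castSucc, Fin.castLE]
  · intro m' hm'
    funext u
    simp [Fin.snoc_castSucc]
  · intro m hm
    simp only [Finset.mem_filter, Finset.mem_univ, true_and] at hm
    rw [Fin.prod_univ_castSucc]
    obtain ⟨_, rfl⟩ := hm
    rw [mul_comm]
    rfl


/-- key evaluation identity for descPochhammer sums -/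
lemma descPochhammer_sum_eval {R : Type*} [CommRing R] (k n : ℕ) :
    (descPochhammer R (k+1)).eval (n : R)
      = (k+1) * ∑ m ∈ Finset.range n, (descPochhammer R k).eval (m : R) := by
  induction n with
  | zero =>
      simp [descPochhammer_succ_left]
  | succ n ih =>
      have h1 : (descPochhammer R (k+1)).eval ((n+1 : ℕ) : R)
          = ((n+1 : ℕ) : R) * (descPochhammer R k).eval (n : R) := by
        rw [descPochhammer_succ_left]
        push_cast
        simp [eval_comp]
      have h2 : (descPochhammer R (k+1)).eval (n : R)
          = (descPochhammer R k).eval (n : R) * ((n : R) - k) :=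
        descPochhammer_succ_eval k (n : R)
      rw [Finset.sum_range_succ, mul_add, ← ih, h1, h2]
      push_cast
      ring

/-- Summation lemma over a field of characteristic zero. -/
lemma summation_poly {K : Type*} [Field K] [CharZero K] :
    ∀ D : ℕ, ∀ H : K[X], H.natDegree ≤ D →
      ∃ S : K[X], (∀ n : ℕ, S.eval (n : K) = ∑ m ∈ Finset.range n, H.eval (m : K)) ∧
        S.natDegree ≤ D + 1 ∧ S.coeff (D + 1) = H.coeff D / (D + 1) := by
  intro D
  induction D with
  | zero =>
      intro H hH
      refine ⟨Polynomial.C (H.coeff 0) * X, ?_, ?_, ?_⟩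
      · intro n
        conv_rhs => rw [Polynomial.eq_C_of_natDegree_le_zero hH]
        rw [Polynomial.eval_mul, Polynomial.eval_C, Polynomial.eval_X]
        simp only [Polynomial.eval_C, Finset.sum_const, Finset.card_range, nsmul_eq_mul]
        ring
      · exact (Polynomial.natDegree_mul_le).trans (by simp)
      · rw [Polynomial.coeff_C_mul, Polynomial.coeff_X_one, mul_one]
        norm_num
  | succ D ih =>
      intro H hH
      set c := H.coeff (D+1) with hc
      set H' := H - c • descPochhammer K (D+1) with hH'
      have hdeg' : H'.natDegree ≤ D := by
        rw [Polynomial.natDegree_le_iff_coeff_eq_zero]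
        intro N hN
        rw [hH', Polynomial.coeff_sub, Polynomial.coeff_smul]
        rcases eq_or_lt_of_le (Nat.succ_le_of_lt hN) with h | h
        · rw [← h]
          have : (descPochhammer K (D+1)).coeff (D+1) = 1 := by
            have := (monic_descPochhammer K (D+1))
            simpa [descPochhammer_natDegree] using this.coeff_natDegree
          simp [this, hc]
        · have h1 : H.coeff N = 0 :=
            Polynomial.coeff_eq_zero_of_natDegree_lt (lt_of_le_of_lt hH h)
          have h2 : (descPochhammer K (D+1)).coeff N = 0 :=
            Polynomial.coeff_eq_zero_of_natDegree_lt
              (by rw [descPochhammer_natDegree]; exact h)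
          simp [h1, h2]
      obtain ⟨S', hS'eval, hS'deg, _⟩ := ih H' hdeg'
      refine ⟨S' + (c / (D+2)) • descPochhammer K (D+2), ?_, ?_, ?_⟩
      · intro n
        have key := descPochhammer_sum_eval (R := K) (D+1) n
        have hne : ((D:K)+2) ≠ 0 := by
          have : ((D+2 : ℕ) : K) ≠ 0 := Nat.cast_ne_zero.mpr (by omega)
          push_cast at this; exact this
        have hsum : ∀ m : ℕ, H.eval (m : K)
            = H'.eval (m : K) + c * (descPochhammer K (D+1)).eval (m : K) := by
          intro m; rw [hH']; simp only [Polynomial.eval_sub, Polynomial.eval_smul,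
            smul_eq_mul]; ring
        rw [Polynomial.eval_add, Polynomial.eval_smul, hS'eval]
        rw [Finset.sum_congr rfl (fun m _ => hsum m), Finset.sum_add_distrib]
        rw [← Finset.mul_sum]
        have : (descPochhammer K (D+2)).eval (n : K)
            = ((D:K)+2) * ∑ m ∈ Finset.range n, (descPochhammer K (D+1)).eval (m : K) := by
          have := descPochhammer_sum_eval (R := K) (D+1) n
          push_cast at this ⊢
          convert this using 2 <;> ring
        rw [smul_eq_mul, this]
        field_simp
      · refine (Polynomial.natDegree_add_le _ _).trans (max_le ?_ ?_)
        · exact hS'deg.trans (by omega)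
        · exact (natDegree_smul_le _ _).trans (by rw [descPochhammer_natDegree])
      · rw [Polynomial.coeff_add, Polynomial.coeff_smul]
        have h1 : S'.coeff (D+2) = 0 :=
          Polynomial.coeff_eq_zero_of_natDegree_lt (by omega)
        have h2 : (descPochhammer K (D+2)).coeff (D+2) = 1 := by
          have := (monic_descPochhammer K (D+2))
          simpa [descPochhammer_natDegree] using this.coeff_natDegree
        rw [h1, h2]
        simp [hc]
        push_cast
        ring_nf


lemma main_Q {K : Type*} [Field K] [CharZero K] :
    ∀ s : ℕ, ∀ idx : Fin s → ℕ,
      ∃ F : K[X], (∀ n : ℕ, F.eval (n : K) = (fN s idx n : K)) ∧ F ≠ 0 ∧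
        F.natDegree = (∑ t, idx t) + s := by
  intro s
  induction s with
  | zero =>
      exact fun idx => ⟨1, fun n => by simp [fN_zero], one_ne_zero, by simp⟩
  | succ s ih =>
      intro idx
      obtain ⟨G, hGeval, hGne, hGdeg⟩ := ih (idx ∘ Fin.castSucc)
      set i := idx (Fin.last s) with hi
      set H := (X : K[X]) ^ i * G with hH
      have hXne : (X : K[X]) ^ i ≠ 0 := pow_ne_zero _ X_ne_zero
      have hHne : H ≠ 0 := mul_ne_zero hXne hGne
      have hHdeg : H.natDegree = i + ((∑ t, (idx ∘ Fin.castSucc) t) + s) := by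
        rw [hH, natDegree_mul hXne hGne, natDegree_X_pow, hGdeg]
      obtain ⟨S, hSeval, hSdegle, hScoeff⟩ := summation_poly H.natDegree H le_rfl
      have hlead : H.coeff H.natDegree ≠ 0 := by
        rw [← Polynomial.leadingCoeff]
        exact Polynomial.leadingCoeff_ne_zero.mpr hHne
      have hSc : S.coeff (H.natDegree + 1) ≠ 0 := by
        rw [hScoeff]
        exact div_ne_zero hlead (by
          have : ((H.natDegree : K) + 1) ≠ 0 := by
            have := Nat.cast_add_one_ne_zero (R := K) H.natDegree
            push_cast at this
            exact this
          exact this)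
      have hSdeg : S.natDegree = H.natDegree + 1 :=
        le_antisymm hSdegle (Polynomial.le_natDegree_of_ne_zero hSc)
      refine ⟨S, ?_, ?_, ?_⟩
      · intro n
        rw [hSeval, fN_succ]
        push_cast
        refine Finset.sum_congr rfl fun m _ => ?_
        rw [hH, Polynomial.eval_mul, Polynomial.eval_pow, Polynomial.eval_X, hGeval]
      · intro h0
        rw [h0] at hSc
        simp at hSc
      · rw [hSdeg, hHdeg, Fin.sum_univ_castSucc]
        simp only [Function.comp]
        omega

lemma decomp {K : Type*} [Field K] :
    ∀ D : ℕ, ∀ F : K[X], F.natDegree ≤ D →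
      ∃ a : ℕ → K, F = ∑ k ∈ Finset.range (D+1), Polynomial.C (a k) * descPochhammer K k := by
  intro D
  induction D with
  | zero =>
      intro F hF
      refine ⟨fun _ => F.coeff 0, ?_⟩
      rw [Polynomial.eq_C_of_natDegree_le_zero hF]
      simp
  | succ D ih =>
      intro F hF
      set c := F.coeff (D+1) with hc
      set G := F - Polynomial.C c * descPochhammer K (D+1) with hG
      have hdegG : G.natDegree ≤ D := by
        rw [Polynomial.natDegree_le_iff_coeff_eq_zero]
        intro N hN
        rw [hG, Polynomial.coeff_sub, Polynomial.coeff_C_mul]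
        rcases eq_or_lt_of_le (Nat.succ_le_of_lt hN) with h | h
        · rw [← h]
          have h1 : (descPochhammer K (D+1)).coeff (D+1) = 1 := by
            have := monic_descPochhammer K (D+1)
            simpa [descPochhammer_natDegree] using this.coeff_natDegree
          simp [h1, hc]
        · have h1 : F.coeff N = 0 :=
            Polynomial.coeff_eq_zero_of_natDegree_lt (lt_of_le_of_lt hF h)
          have h2 : (descPochhammer K (D+1)).coeff N = 0 :=
            Polynomial.coeff_eq_zero_of_natDegree_lt
              (by rw [descPochhammer_natDegree]; exact h)
          simp [h1, h2]
      obtain ⟨a, ha⟩ := ih G hdegG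
      refine ⟨fun k => if k = D+1 then c else a k, ?_⟩
      rw [Finset.sum_range_succ]
      beta_reduce
      rw [if_pos rfl]
      rw [Finset.sum_congr rfl (fun k hk =>
        show Polynomial.C (if k = D+1 then c else a k) * descPochhammer K k
            = Polynomial.C (a k) * descPochhammer K k by
          rw [if_neg (Nat.ne_of_lt (Finset.mem_range.mp hk))])]
      rw [← ha, hG]
      ring


lemma factorial_isUnit (p : ℕ) [hp : Fact p.Prime] (k : ℕ) (hk : k < p) :
    IsUnit ((k.factorial : ℤ_[p])) := by
  rw [PadicInt.isUnit_iff]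
  refine le_antisymm (PadicInt.norm_le_one _) ?_
  rw [← not_lt]
  intro h
  have h2 : ((p : ℤ)) ∣ (k.factorial : ℤ) := by
    have := (PadicInt.norm_int_lt_one_iff_dvd (k.factorial : ℤ)).mp (by exact_mod_cast h)
    exact this
  have h3 : p ∣ k.factorial := by exact_mod_cast h2
  have := (Nat.Prime.dvd_factorial hp.out).mp h3
  omega

lemma integrality (p : ℕ) [hp : Fact p.Prime] (D : ℕ) (hD : D < p)
    (a : ℕ → ℚ_[p])
    (hvals : ∀ j : ℕ, j ≤ D → ∃ z : ℤ_[p], (z : ℚ_[p]) =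
      (∑ k ∈ Finset.range (D+1), Polynomial.C (a k) * descPochhammer ℚ_[p] k).eval (j : ℚ_[p])) :
    ∀ k : ℕ, k ≤ D → ∃ b : ℤ_[p], (b : ℚ_[p]) = a k := by
  intro k
  induction k using Nat.strong_induction_on with
  | _ k ih =>
    intro hk
    obtain ⟨z, hz⟩ := hvals k hk
    have heval : (∑ t ∈ Finset.range (D+1), Polynomial.C (a t) * descPochhammer ℚ_[p] t).eval
        (k : ℚ_[p]) = ∑ t ∈ Finset.range (D+1), a t * (k.descFactorial t : ℚ_[p]) := by
      rw [Polynomial.eval_finset_sum]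
      refine Finset.sum_congr rfl fun t _ => ?_
      rw [Polynomial.eval_mul, Polynomial.eval_C, descPochhammer_eval_eq_descFactorial]
    have hsplit : ∑ t ∈ Finset.range (D+1), a t * (k.descFactorial t : ℚ_[p])
        = (∑ t ∈ Finset.range k, a t * (k.descFactorial t : ℚ_[p]))
          + a k * (k.factorial : ℚ_[p]) := by
      rw [← Finset.sum_subset (Finset.range_subset_range.mpr (show k+1 ≤ D+1 by omega))
        (fun t ht hnot => by
          rw [Nat.descFactorial_eq_zero_iff_lt.mpr (by
            simp only [Finset.mem_range] at ht hnot; omega)]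
          simp)]
      rw [Finset.sum_range_succ, Nat.descFactorial_self]
    -- each earlier coefficient is integral
    have hin : ∀ t ∈ Finset.range k, ∃ bt : ℤ_[p], ((bt : ℚ_[p])) = a t * (k.descFactorial t : ℚ_[p]) := by
      intro t ht
      obtain ⟨bt, hbt⟩ := ih t (Finset.mem_range.mp ht) (by
        have := Finset.mem_range.mp ht; omega)
      exact ⟨bt * (k.descFactorial t : ℤ_[p]), by push_cast [hbt]; ring⟩
    choose bt hbt using hin
    have hsum : ∃ w : ℤ_[p], (w : ℚ_[p]) = a k * (k.factorial : ℚ_[p]) := by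
      refine ⟨z - ∑ t ∈ (Finset.range k).attach, bt t.1 t.2, ?_⟩
      have hcast : ((∑ t ∈ (Finset.range k).attach, bt t.1 t.2 : ℤ_[p]) : ℚ_[p])
          = ∑ t ∈ (Finset.range k).attach, ((bt t.1 t.2 : ℤ_[p]) : ℚ_[p]) :=
        map_sum (PadicInt.Coe.ringHom) _ _
      rw [PadicInt.coe_sub, hcast, hz, heval, hsplit]
      rw [← Finset.sum_attach (Finset.range k) (fun t => a t * (k.descFactorial t : ℚ_[p]))]
      rw [Finset.sum_congr rfl (fun t _ => (hbt t.1 t.2).symm)]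
      ring
    obtain ⟨w, hw⟩ := hsum
    obtain ⟨u, hu⟩ := factorial_isUnit p k (lt_of_le_of_lt hk hD)
    refine ⟨w * ↑u⁻¹, ?_⟩
    have hfact : ((k.factorial : ℤ_[p]) : ℚ_[p]) = (k.factorial : ℚ_[p]) := by push_cast; rfl
    have h5 : ((w * ↑u⁻¹ : ℤ_[p]) : ℚ_[p])
        = (a k * (k.factorial : ℚ_[p])) * ((↑u⁻¹ : ℤ_[p]) : ℚ_[p]) := by
      push_cast [hw]
      ring
    rw [h5, mul_assoc, ← hfact, ← hu]
    have hone : ((↑u : ℤ_[p]) : ℚ_[p]) * ((↑u⁻¹ : ℤ_[p]) : ℚ_[p]) = 1 := by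
      rw [← PadicInt.coe_mul, ← Units.val_mul, mul_inv_cancel]
      simp
    rw [hone, mul_one]


open scoped Classical in
/-- **Lemma 3.3.** For `s ≥ 1`, `i₁, …, i_s ≥ 0` with `d = i₁ + ⋯ + i_s + s < p`, the function
`f(n) = Σ_{0 ≤ m₁ < ⋯ < m_s < n} m₁^{i₁}⋯m_s^{i_s}` (convention `0⁰ = 1`) is given by a
polynomial `F ∈ ℤ_p[U]` with `F(0) = 0` and `deg F = d`. -/
theorem stmt_9 (p : ℕ) [Fact p.Prime] (s : ℕ) (hs : 1 ≤ s)
    (idx : Fin s → ℕ) (hd : (∑ t, idx t) + s < p) :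
    ∃ F : Polynomial ℤ_[p],
      (∀ n : ℕ,
        Polynomial.eval (n : ℤ_[p]) F =
          ∑ m ∈ Finset.univ.filter (fun m : Fin s → Fin n => StrictMono m),
            ∏ t : Fin s, ((m t : ℕ) : ℤ_[p]) ^ idx t) ∧
      Polynomial.eval 0 F = 0 ∧
      F.natDegree = (∑ t, idx t) + s := by
  set D := (∑ t, idx t) + s with hD
  obtain ⟨F, hFeval, hFne, hFdeg⟩ := main_Q (K := ℚ_[p]) s idx
  obtain ⟨a, ha⟩ := decomp D F (by rw [hFdeg])
  have hvals : ∀ j : ℕ, j ≤ D → ∃ z : ℤ_[p], (z : ℚ_[p]) =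
      (∑ k ∈ Finset.range (D+1), Polynomial.C (a k) * descPochhammer ℚ_[p] k).eval
        (j : ℚ_[p]) := by
    intro j _
    exact ⟨(fN s idx j : ℤ_[p]), by rw [← ha, hFeval j, PadicInt.coe_natCast]⟩
  have hint := integrality p D hd a hvals
  have hbex : ∀ k : ℕ, ∃ b : ℤ_[p], k ≤ D → (b : ℚ_[p]) = a k := by
    intro k
    by_cases h : k ≤ D
    · exact (hint k h).imp (fun b hb _ => hb)
    · exact ⟨0, fun h' => absurd h' h⟩
  choose b hb using hbex
  set F' : Polynomial ℤ_[p] :=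
    ∑ k ∈ Finset.range (D+1), Polynomial.C (b k) * descPochhammer ℤ_[p] k with hF'
  have hmap : F'.map (PadicInt.Coe.ringHom) = F := by
    rw [hF', ha, Polynomial.map_sum]
    refine Finset.sum_congr rfl fun k hk => ?_
    rw [Polynomial.map_mul, Polynomial.map_C, descPochhammer_map]
    congr 1
    rw [show (PadicInt.Coe.ringHom (b k)) = ((b k : ℤ_[p]) : ℚ_[p]) from rfl,
      hb k (Nat.lt_succ_iff.mp (Finset.mem_range.mp hk))]
  have hevalnat : ∀ n : ℕ, ((F'.eval (n : ℤ_[p]) : ℤ_[p]) : ℚ_[p]) = ((fN s idx n : ℕ) : ℚ_[p]) := by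
    intro n
    have h1 : (F'.map (PadicInt.Coe.ringHom)).eval ((n : ℕ) : ℚ_[p])
        = PadicInt.Coe.ringHom (F'.eval (n : ℤ_[p])) := by
      rw [Polynomial.eval_map, Polynomial.eval₂_at_natCast]
    rw [show ((F'.eval (n : ℤ_[p]) : ℤ_[p]) : ℚ_[p]) = PadicInt.Coe.ringHom (F'.eval (n : ℤ_[p])) from rfl,
      ← h1, hmap, hFeval n]
  have heval : ∀ n : ℕ, F'.eval (n : ℤ_[p]) = ((fN s idx n : ℕ) : ℤ_[p]) := by
    intro n
    apply Subtype.coe_injective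
    show ((F'.eval (n : ℤ_[p]) : ℤ_[p]) : ℚ_[p]) = (((fN s idx n : ℕ) : ℤ_[p]) : ℚ_[p])
    rw [hevalnat n, PadicInt.coe_natCast]
  refine ⟨F', ?_, ?_, ?_⟩
  · intro n
    rw [heval n, fN]
    push_cast
    rfl
  · have h0 := heval 0
    rw [Nat.cast_zero] at h0
    rw [h0, fN_apply_zero s hs idx, Nat.cast_zero]
  · have : (F'.map (PadicInt.Coe.ringHom)).natDegree = F'.natDegree := by
      apply Polynomial.natDegree_map_eq_of_injective
      exact fun x y h => Subtype.ext h
    rw [← this, hmap, hFdeg]
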